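/- The Yukawa coupling K^{3,0} of V_{(2,38)} equals a constant multiple of the discriminant: let D(z1,z2) = (1+z1)³ + z1³ z2, and let U ⊆ ℂ² be a nonempty connected open set on which z1 ≠ 0, z2 ≠ 0 and D ≠ 0. A holomorphic function K : U → ℂ satisfies the system z1·∂K/∂z1 = (z1(3 + 6z1 + 3z1² + 3z1² z2)/D)·K and z2·∂K/∂z2 = (z1³ z2 / D)·K on U if and only if there is a constant c ∈ ℂ with K(z1,z2) = c·D(z1,z2) for all (z1,z2) ∈ U. -/

import Mathlib

open Metric Filter Topology

noncomputable section

/-- The discriminant. -/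
private def Dd : ℂ × ℂ → ℂ := fun p => (1 + p.1)^3 + p.1^3 * p.2

/-- Its total derivative as a continuous linear map. -/
private def LD (p : ℂ × ℂ) : ℂ × ℂ →L[ℂ] ℂ :=
  (3*(1+p.1)^2 + 3*p.1^2*p.2) • ContinuousLinearMap.fst ℂ ℂ ℂ
    + p.1^3 • ContinuousLinearMap.snd ℂ ℂ ℂ

private lemma LD_apply (p v : ℂ × ℂ) :
    LD p v = (3*(1+p.1)^2 + 3*p.1^2*p.2) * v.1 + p.1^3 * v.2 := by
  simp [LD]

private lemma clm_apply (L : ℂ × ℂ →L[ℂ] ℂ) (v : ℂ × ℂ) :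
    L v = v.1 * L (1, 0) + v.2 * L (0, 1) := by
  have hv : v = v.1 • ((1:ℂ), (0:ℂ)) + v.2 • ((0:ℂ), (1:ℂ)) := by
    simp [Prod.ext_iff]
  calc L v = L (v.1 • ((1:ℂ), (0:ℂ)) + v.2 • ((0:ℂ), (1:ℂ))) := by rw [← hv]
    _ = v.1 * L (1, 0) + v.2 * L (0, 1) := by
        rw [map_add, map_smul, map_smul]; simp [smul_eq_mul]

private lemma hasFDerivD (p : ℂ × ℂ) : HasFDerivAt Dd (LD p) p := by
  have h1 : HasFDerivAt (fun q : ℂ × ℂ => q.1) (ContinuousLinearMap.fst ℂ ℂ ℂ) p :=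
    hasFDerivAt_fst
  have h2 : HasFDerivAt (fun q : ℂ × ℂ => q.2) (ContinuousLinearMap.snd ℂ ℂ ℂ) p :=
    hasFDerivAt_snd
  have h3 : HasFDerivAt (fun q : ℂ × ℂ => 1 + q.1) (ContinuousLinearMap.fst ℂ ℂ ℂ) p :=
    h1.const_add 1
  have hA := (h3.mul h3).mul h3
  have hB := ((h1.mul h1).mul h1).mul h2
  have h5 := hA.add hB
  have hfun : Dd = fun q : ℂ × ℂ => ((1+q.1) * (1+q.1)) * (1+q.1) + ((q.1*q.1)*q.1) * q.2 := by
    funext q; simp only [Dd]; ring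
  rw [hfun]
  refine h5.congr_fderiv ?_
  apply ContinuousLinearMap.ext; intro v
  simp [LD, ContinuousLinearMap.smulRight_apply, smul_eq_mul]
  ring

/-- Constancy of a function with vanishing derivative on an open preconnected set. -/
private lemma const_of_deriv_zero {U : Set (ℂ × ℂ)} (hUo : IsOpen U)
    (hUc : IsPreconnected U) {G : ℂ × ℂ → ℂ}
    (hG : ∀ p ∈ U, HasFDerivAt G (0 : ℂ × ℂ →L[ℂ] ℂ) p)
    {p₀ : ℂ × ℂ} (hp₀ : p₀ ∈ U) : ∀ p ∈ U, G p = G p₀ := by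
  -- local constancy
  have hloc : ∀ p ∈ U, ∀ᶠ q in 𝓝 p, G q = G p := by
    intro p hp
    obtain ⟨ε, hε, hball⟩ := Metric.isOpen_iff.1 hUo p hp
    have hconv : Convex ℝ (ball p ε) := convex_ball p ε
    have hdiff : DifferentiableOn ℂ G (ball p ε) := fun q hq =>
      (hG q (hball hq)).differentiableAt.differentiableWithinAt
    have hzero : ∀ q ∈ ball p ε, fderivWithin ℂ G (ball p ε) q = 0 := fun q hq =>
      ((hG q (hball hq)).hasFDerivWithinAt).fderivWithin (isOpen_ball.uniqueDiffOn q hq)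
    filter_upwards [ball_mem_nhds p hε] with q hq
    exact hconv.is_const_of_fderivWithin_eq_zero hdiff hzero hq (mem_ball_self hε)
  set u : Set (ℂ × ℂ) := {p | p ∈ U ∧ G p = G p₀} with hu_def
  have hu_open : IsOpen u := by
    rw [isOpen_iff_mem_nhds]
    rintro p ⟨hpU, hpG⟩
    filter_upwards [hloc p hpU, hUo.mem_nhds hpU] with q hq hqU
    exact ⟨hqU, hq.trans hpG⟩
  have hsub : U ⊆ u := by
    apply hUc.subset_of_closure_inter_subset hu_open ⟨p₀, hp₀, hp₀, rfl⟩
    rintro x ⟨hxc, hxU⟩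
    refine ⟨hxU, ?_⟩
    have hne : (𝓝[u] x).NeBot := mem_closure_iff_nhdsWithin_neBot.mp hxc
    have t1 : Tendsto G (𝓝[u] x) (𝓝 (G x)) :=
      ((hG x hxU).differentiableAt.continuousAt).tendsto.mono_left nhdsWithin_le_nhds
    have t2 : Tendsto G (𝓝[u] x) (𝓝 (G p₀)) := by
      have hev : ∀ᶠ q in 𝓝[u] x, G q = G p₀ :=
        eventually_nhdsWithin_of_forall fun q hq => hq.2
      exact Tendsto.congr' (hev.mono fun q hq => hq.symm) tendsto_const_nhds
    exact tendsto_nhds_unique t1 t2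
  exact fun p hp => (hsub hp).2

/-- The Yukawa coupling `K^{3,0}` of `V_{(2,38)}` equals a constant multiple of the
discriminant `D(z1,z2) = (1+z1)^3 + z1^3 z2`: a holomorphic function on a nonempty
connected open set avoiding `{z1 = 0}`, `{z2 = 0}` and `{D = 0}` satisfies the
first-order system iff it is a constant multiple of `D`. -/
theorem V238_Yukawa_is_discriminant (U : Set (ℂ × ℂ)) (hUopen : IsOpen U)
    (hUne : U.Nonempty) (hUconn : IsConnected U)
    (hz1 : ∀ p ∈ U, p.1 ≠ 0) (hz2 : ∀ p ∈ U, p.2 ≠ 0)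
    (hD : ∀ p ∈ U, (1 + p.1)^3 + p.1^3 * p.2 ≠ 0)
    (K : ℂ × ℂ → ℂ) (hK : DifferentiableOn ℂ K U) :
    ((∀ p ∈ U, p.1 * fderiv ℂ K p (1, 0) =
        (p.1 * (3 + 6*p.1 + 3*p.1^2 + 3*p.1^2*p.2) / ((1 + p.1)^3 + p.1^3 * p.2)) * K p) ∧
     (∀ p ∈ U, p.2 * fderiv ℂ K p (0, 1) =
        (p.1^3 * p.2 / ((1 + p.1)^3 + p.1^3 * p.2)) * K p))
    ↔ ∃ c : ℂ, ∀ p ∈ U, K p = c * ((1 + p.1)^3 + p.1^3 * p.2) := by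
  have hDd : ∀ p ∈ U, Dd p ≠ 0 := fun p hp => hD p hp
  constructor
  · rintro ⟨h1, h2⟩
    obtain ⟨p₀, hp₀⟩ := hUne
    set G : ℂ × ℂ → ℂ := fun q => K q * (Dd q)⁻¹ with hG_def
    have hGzero : ∀ p ∈ U, HasFDerivAt G (0 : ℂ × ℂ →L[ℂ] ℂ) p := by
      intro p hp
      have hKd : HasFDerivAt K (fderiv ℂ K p) p :=
        (hK.differentiableAt (hUopen.mem_nhds hp)).hasFDerivAt
      have hinv : HasFDerivAt (fun q => (Dd q)⁻¹)
          ((ContinuousLinearMap.smulRight (1 : ℂ →L[ℂ] ℂ) (-(Dd p ^ 2)⁻¹)).comp (LD p)) p :=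
        (hasFDerivAt_inv (hDd p hp)).comp p (hasFDerivD p)
      have hmul := hKd.mul hinv
      -- compute the values of fderiv K p on the basis
      have e1 : fderiv ℂ K p (1, 0) =
          (3*(1+p.1)^2 + 3*p.1^2*p.2) / Dd p * K p := by
        have h' := h1 p hp
        have hp1 := hz1 p hp
        refine mul_left_cancel₀ hp1 ?_
        rw [h']; simp only [Dd]; ring
      have e2 : fderiv ℂ K p (0, 1) = p.1^3 / Dd p * K p := by
        have h' := h2 p hp
        have hp2 := hz2 p hp
        refine mul_left_cancel₀ hp2 ?_
        rw [h']; simp only [Dd]; ring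
      refine hmul.congr_fderiv ?_
      apply ContinuousLinearMap.ext; intro v
      rw [clm_apply]
      have hval : ∀ w : ℂ × ℂ,
          (K p • (ContinuousLinearMap.smulRight (1 : ℂ →L[ℂ] ℂ) (-(Dd p ^ 2)⁻¹)).comp (LD p)
            + (Dd p)⁻¹ • fderiv ℂ K p) w
          = K p * (LD p w * -(Dd p ^ 2)⁻¹) + (Dd p)⁻¹ * fderiv ℂ K p w := by
        intro w
        simp [ContinuousLinearMap.smulRight_apply, smul_eq_mul]
      rw [hval, hval, e1, e2, LD_apply, LD_apply]
      have hne := hDd p hp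
      simp only [ContinuousLinearMap.zero_apply]
      field_simp
      ring
    have hconst := const_of_deriv_zero hUopen hUconn.isPreconnected hGzero hp₀
    refine ⟨K p₀ * (Dd p₀)⁻¹, fun p hp => ?_⟩
    have := hconst p hp
    have hne := hDd p hp
    have : K p = K p₀ * (Dd p₀)⁻¹ * Dd p := by
      simp only [hG_def] at this
      rw [← this, inv_mul_cancel_right₀ hne]
    simpa [Dd] using this
  · rintro ⟨c, hc⟩ 
    have key : ∀ p ∈ U, fderiv ℂ K p = c • LD p := by
      intro p hp
      have hev : K =ᶠ[𝓝 p] fun q => c * Dd q := by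
        filter_upwards [hUopen.mem_nhds hp] with q hq
        simpa [Dd] using hc q hq
      rw [hev.fderiv_eq]
      exact (((hasFDerivD p).const_mul c)).fderiv
    constructor
    · intro p hp
      rw [key p hp, hc p hp]
      have hne := hD p hp
      simp only [ContinuousLinearMap.smul_apply, LD_apply, smul_eq_mul]
      field_simp
      ring
    · intro p hp
      rw [key p hp, hc p hp]
      have hne := hD p hp
      simp only [ContinuousLinearMap.smul_apply, LD_apply, smul_eq_mul]
      rw [div_mul_eq_mul_div, eq_div_iff hne]
      ring
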